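/- Let N be a topological group and f₁, f₂, g₁, g₂ : M → N continuous maps. If (f₁ · f₂⁻¹, const_1) is homotopic (as a pair) to (g₁, g₂), then (f₁, f₂) is homotopic to (g₁ · f₂, g₂ · f₂), and the coincidence sets satisfy C(g₁ · f₂, g₂ · f₂) = C(g₁, g₂). Consequently MCC(f₁, f₂) ≤ MCC(f₁ · f₂⁻¹, const_1). -/

import Mathlib

open ContinuousMap

/-- Coincidence set of two continuous maps. -/
def coin {M N : Type*} [TopologicalSpace M] [TopologicalSpace N] (u v : C(M, N)) :
    Set M := {x | u x = v x}

/-- Minimum number of path components of the coincidence set over the homotopy classes. -/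
noncomputable def MCC {M N : Type*} [TopologicalSpace M] [TopologicalSpace N]
    (f₁ f₂ : C(M, N)) : ℕ :=
  sInf {n : ℕ | ∃ g₁ g₂ : C(M, N), g₁.Homotopic f₁ ∧ g₂.Homotopic f₂ ∧
    Nat.card (ZerothHomotopy (coin g₁ g₂)) = n}


lemma homotopic_mul_right {M N : Type*} [TopologicalSpace M] [TopologicalSpace N] [Group N]
    [IsTopologicalGroup N] {u v : C(M, N)} (w : C(M, N)) (h : u.Homotopic v) :
    (u * w).Homotopic (v * w) := by
  obtain ⟨H⟩ := h
  exact ⟨{ toFun := fun p => H p * w p.2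
           continuous_toFun := H.continuous.mul (w.continuous.comp continuous_snd)
           map_zero_left := by simp
           map_one_left := by simp }⟩

/-- If `(f₁·f₂⁻¹, 1)` is homotopic as a pair to `(g₁, g₂)` then `(f₁, f₂)` is homotopic to
`(g₁·f₂, g₂·f₂)`, whose coincidence set equals that of `(g₁, g₂)`; consequently
`MCC(f₁,f₂) ≤ MCC(f₁·f₂⁻¹, const 1)`. -/
theorem mcc_le_of_group {M N : Type*} [TopologicalSpace M] [CompactSpace M]
    [TopologicalSpace N] [Group N] [IsTopologicalGroup N]
    (f₁ f₂ g₁ g₂ : C(M, N))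
    (h₁ : (f₁ * f₂⁻¹).Homotopic g₁)
    (h₂ : (ContinuousMap.const M (1 : N)).Homotopic g₂) :
    f₁.Homotopic (g₁ * f₂) ∧ f₂.Homotopic (g₂ * f₂) ∧
    coin (g₁ * f₂) (g₂ * f₂) = coin g₁ g₂ ∧
    MCC f₁ f₂ ≤ MCC (f₁ * f₂⁻¹) (ContinuousMap.const M (1 : N)) := by
  have e₁ : (f₁ * f₂⁻¹) * f₂ = f₁ := by ext x; simp
  have e₂ : (ContinuousMap.const M (1 : N)) * f₂ = f₂ := by ext x; simp
  have hf₁ : f₁.Homotopic (g₁ * f₂) := by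
    have := homotopic_mul_right f₂ h₁; rwa [e₁] at this
  have hf₂ : f₂.Homotopic (g₂ * f₂) := by
    have := homotopic_mul_right f₂ h₂; rwa [e₂] at this
  have hcoin : ∀ u v : C(M, N), coin (u * f₂) (v * f₂) = coin u v := by
    intro u v
    ext x
    simp [coin, mul_left_inj]
  refine ⟨hf₁, hf₂, hcoin g₁ g₂, ?_⟩
  unfold MCC
  refine csInf_le_csInf (OrderBot.bddBelow _) ⟨_, g₁, g₂, h₁.symm, h₂.symm, rfl⟩ ?_
  rintro n ⟨u, v, hu, hv, rfl⟩
  refine ⟨u * f₂, v * f₂, ?_, ?_, by rw [hcoin]⟩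
  · have := homotopic_mul_right f₂ hu; rwa [e₁] at this
  · have := homotopic_mul_right f₂ hv; rwa [e₂] at this
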